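/- Let ψ : G → G be a commutator-central endomorphism of a group G and let α, β ∈ 𝓔. Write g ∘ h := g ∘_{ψ,α} h and g ⋆ h := g ∘_{ψ,β} h, and for g ∈ G write g̃ := ψ_α(g)⁻¹ · g⁻¹ · ψ_α(g) (the inverse of g in (G, ∘)). Then g ⋆ (h ∘ k) = ((g ⋆ h) ∘ g̃) ∘ (g ⋆ k) for all g, h, k ∈ G; that is, any two operations arising from the same commutator-central map form a skew left brace, so (G, {∘_{ψ,α} : α ∈ 𝓔}) is a brace block. -/

import Mathlib

/-- Evaluation of an element of the free group `𝓔 = FreeGroup (Monoid.End G)`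
at an element `g : G`: the image of `α` under the homomorphism `𝓔 → G`
given by `FreeGroup.lift (fun φ => φ g)`. -/
def evalE {G : Type*} [Group G] (α : FreeGroup (Monoid.End G)) (g : G) : G :=
  FreeGroup.lift (fun φ : Monoid.End G => φ g) α

open scoped commutatorElement

section Aux
variable {G : Type*} [Group G]

lemma evalE_of (φ : Monoid.End G) (g : G) : evalE (FreeGroup.of φ) g = φ g :=
  FreeGroup.lift_apply_of

lemma evalE_pure (φ : Monoid.End G) (g : G) : evalE (pure φ) g = φ g :=
  FreeGroup.lift_apply_of

lemma evalE_mul (γ δ : FreeGroup (Monoid.End G)) (g : G) :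
    evalE (γ * δ) g = evalE γ g * evalE δ g := map_mul _ _ _

lemma evalE_inv (γ : FreeGroup (Monoid.End G)) (g : G) :
    evalE γ⁻¹ g = (evalE γ g)⁻¹ := map_inv _ _

lemma evalE_one (g : G) : evalE (1 : FreeGroup (Monoid.End G)) g = 1 := map_one _

lemma evalE_one_right (γ : FreeGroup (Monoid.End G)) : evalE γ (1 : G) = 1 := by
  have h : (FreeGroup.lift (fun φ : Monoid.End G => φ (1 : G))) = 1 := by
    apply FreeGroup.ext_hom
    intro φ
    simp
  rw [evalE, h]
  rfl

def PhiC (ψ : Monoid.End G) : G →* G ⧸ Subgroup.center G :=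
  (QuotientGroup.mk' (Subgroup.center G)).comp ψ

lemma phiC_comm (ψ : Monoid.End G) (hψ : ∀ g h : G, ψ ⁅g, h⁆ ∈ Subgroup.center G) (a b : G) :
    Commute (PhiC ψ a) (PhiC ψ b) := by
  have h1 : PhiC ψ ⁅a, b⁆ = 1 := by
    have h2 := hψ a b
    rw [← QuotientGroup.eq_one_iff (ψ ⁅a, b⁆)] at h2
    exact h2
  rw [map_commutatorElement] at h1
  exact commutatorElement_eq_one_iff_mul_comm.mp h1

lemma phiC_eval_mul (ψ : Monoid.End G) (hψ : ∀ g h : G, ψ ⁅g, h⁆ ∈ Subgroup.center G)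
    (γ : FreeGroup (Monoid.End G)) :
    ∀ x y : G, PhiC ψ (evalE γ (x * y)) = PhiC ψ (evalE γ x) * PhiC ψ (evalE γ y) := by
  induction γ using FreeGroup.induction_on with
  | C1 => intro x y; simp [evalE_one]
  | of φ =>
      intro x y
      rw [evalE_of, evalE_of, evalE_of, map_mul φ, map_mul]
  | inv_of φ _ =>
      intro x y
      rw [evalE_inv, evalE_inv, evalE_inv, evalE_of, evalE_of, evalE_of, map_mul φ,
        map_inv, map_inv, map_inv, map_mul, mul_inv_rev]
      exact ((phiC_comm ψ hψ (φ x) (φ y)).inv_inv).eq.symm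
  | mul γ δ ihγ ihδ =>
      intro x y
      rw [evalE_mul, evalE_mul, evalE_mul, map_mul, map_mul, map_mul, ihγ, ihδ]
      have hc : Commute (PhiC ψ (evalE γ y)) (PhiC ψ (evalE δ x)) := phiC_comm ψ hψ _ _
      rw [mul_assoc, ← mul_assoc (PhiC ψ (evalE γ y)), hc.eq]
      group

lemma phiC_eval_inv (ψ : Monoid.End G) (hψ : ∀ g h : G, ψ ⁅g, h⁆ ∈ Subgroup.center G)
    (γ : FreeGroup (Monoid.End G)) (x : G) :
    PhiC ψ (evalE γ x⁻¹) = (PhiC ψ (evalE γ x))⁻¹ := by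
  have h0 : PhiC ψ (evalE γ (x * x⁻¹)) = 1 := by
    rw [mul_inv_cancel, evalE_one_right, map_one]
  rw [phiC_eval_mul ψ hψ] at h0
  exact (inv_eq_of_mul_eq_one_right h0).symm

lemma central_conj {z : G} (hz : ∀ t : G, z * t = t * z) (a x : G) :
    z * a * x * (z * a)⁻¹ = a * x * a⁻¹ := by
  calc z * a * x * (z * a)⁻¹ = z * (a * x * a⁻¹) * z⁻¹ := by group
    _ = (a * x * a⁻¹) * z * z⁻¹ := by rw [hz]
    _ = a * x * a⁻¹ := by group

lemma main_core (g h k A B C D E z1 z2 z3 z4 : G)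
    (hz1 : ∀ t : G, z1 * t = t * z1) (hz2 : ∀ t : G, z2 * t = t * z2)
    (hz3 : ∀ t : G, z3 * t = t * z3) (hz4 : ∀ t : G, z4 * t = t * z4)
    (hD : D = z1 * (A * C)) (hE : E = z2 * C)
    (hAC : A * C = z3 * (C * A)) (hBC : B * C = z4 * (C * B)) :
    g * B * (h * C * k * C⁻¹) * B⁻¹ =
      g * B * h * B⁻¹ * D * (A⁻¹ * g⁻¹ * A) * D⁻¹ * E * (g * B * k * B⁻¹) * E⁻¹ := by
  have hz4i : ∀ t : G, z4⁻¹ * t = t * z4⁻¹ := fun t => (Commute.inv_left (a := z4) (b := t) (hz4 t)).eq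
  have key1 : D * (A⁻¹ * g⁻¹ * A) * D⁻¹ = C * g⁻¹ * C⁻¹ := by
    calc D * (A⁻¹ * g⁻¹ * A) * D⁻¹
        = z1 * (A * C) * (A⁻¹ * g⁻¹ * A) * (z1 * (A * C))⁻¹ := by rw [hD]
      _ = (A * C) * (A⁻¹ * g⁻¹ * A) * (A * C)⁻¹ := central_conj hz1 _ _
      _ = z3 * (C * A) * (A⁻¹ * g⁻¹ * A) * (z3 * (C * A))⁻¹ := by rw [hAC]
      _ = (C * A) * (A⁻¹ * g⁻¹ * A) * (C * A)⁻¹ := central_conj hz3 _ _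
      _ = C * g⁻¹ * C⁻¹ := by group
  have h5 : C * B = z4⁻¹ * (B * C) := by rw [hBC]; group
  have h2 : B⁻¹ * C⁻¹ = z4 * (C⁻¹ * B⁻¹) := by
    calc B⁻¹ * C⁻¹ = (C * B)⁻¹ := by group
      _ = (z4⁻¹ * (B * C))⁻¹ := by rw [← h5]
      _ = (C⁻¹ * B⁻¹) * z4 := by group
      _ = z4 * (C⁻¹ * B⁻¹) := (hz4 _).symm
  symm
  calc g * B * h * B⁻¹ * D * (A⁻¹ * g⁻¹ * A) * D⁻¹ * E * (g * B * k * B⁻¹) * E⁻¹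
      = (g * B * h * B⁻¹) * (D * (A⁻¹ * g⁻¹ * A) * D⁻¹) * (E * (g * B * k * B⁻¹) * E⁻¹) := by
        group
    _ = (g * B * h * B⁻¹) * (C * g⁻¹ * C⁻¹) * (z2 * C * (g * B * k * B⁻¹) * (z2 * C)⁻¹) := by
        rw [key1, hE]
    _ = (g * B * h * B⁻¹) * (C * g⁻¹ * C⁻¹) * (C * (g * B * k * B⁻¹) * C⁻¹) := by
        rw [central_conj hz2]
    _ = g * B * h * (B⁻¹ * (C * B)) * k * (B⁻¹ * C⁻¹) := by group
    _ = g * B * h * (B⁻¹ * (z4⁻¹ * (B * C))) * k * (z4 * (C⁻¹ * B⁻¹)) := by rw [h5, h2]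
    _ = (g * B * h * B⁻¹ * z4⁻¹ * B * C * k) * (z4 * (C⁻¹ * B⁻¹)) := by group
    _ = (g * B * h * B⁻¹ * z4⁻¹ * B * C * k) * ((C⁻¹ * B⁻¹) * z4) := by rw [hz4]
    _ = (g * B * h * B⁻¹) * (z4⁻¹ * (B * C * k * C⁻¹ * B⁻¹ * z4)) := by group
    _ = (g * B * h * B⁻¹) * ((B * C * k * C⁻¹ * B⁻¹ * z4) * z4⁻¹) := by rw [hz4i]
    _ = g * B * (h * C * k * C⁻¹) * B⁻¹ := by group

end Aux

/-- The binary operation `g ∘_{ψ,α} h = g · ψ_α(g) · h · ψ_α(g)⁻¹`, where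
`ψ_α(g) = ψ (α(g))`. -/
def op {G : Type*} [Group G] (ψ : Monoid.End G) (α : FreeGroup (Monoid.End G)) (g h : G) : G :=
  g * ψ (evalE α g) * h * (ψ (evalE α g))⁻¹

/-- for a single commutator-central `ψ` and any `α, β ∈ 𝓔`, the
brace relation `g ⋆ (h ∘ k) = ((g ⋆ h) ∘ g̃) ∘ (g ⋆ k)` holds with `∘ = ∘_{ψ,α}`,
`⋆ = ∘_{ψ,β}`; hence `(G, {∘_{ψ,α} : α ∈ 𝓔})` is a brace block. -/
theorem brace_relation_one_map {G : Type*} [Group G]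
    (ψ : Monoid.End G) (hψ : ∀ g h : G, ψ ⁅g, h⁆ ∈ Subgroup.center G)
    (α β : FreeGroup (Monoid.End G)) (g h k : G) :
    op ψ β g (op ψ α h k) =
      op ψ α (op ψ α (op ψ β g h) ((ψ (evalE α g))⁻¹ * g⁻¹ * ψ (evalE α g)))
        (op ψ β g k) := by
  simp only [op]
  set A := ψ (evalE α g) with hA
  set B := ψ (evalE β g) with hB
  set C := ψ (evalE α h) with hC
  set D := ψ (evalE α (g * B * h * B⁻¹)) with hDdef
  set E := ψ (evalE α (g * B * h * B⁻¹ * D * (A⁻¹ * g⁻¹ * A) * D⁻¹)) with hEdef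
  -- abbreviations in the quotient by the center
  have hQ : ∀ s t : G, Commute (PhiC ψ s) (PhiC ψ t) := phiC_comm ψ hψ
  have commConj : ∀ u v : G ⧸ Subgroup.center G, u * v = v * u → u * v * u⁻¹ = v := by
    intro u v hc
    rw [hc, mul_inv_cancel_right]
  set p := PhiC ψ (evalE α g) with hp
  set q := PhiC ψ (evalE α h) with hq
  set r := PhiC ψ (evalE α B) with hr
  set s := PhiC ψ (evalE α D) with hs
  set t := PhiC ψ (evalE α A) with ht
  set u := PhiC ψ (evalE β g) with hu
  have c1 : r * q * r⁻¹ = q := commConj r q (hQ _ _)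
  have c2 : t⁻¹ * p⁻¹ * t = p⁻¹ := by
    have h' := commConj t⁻¹ p⁻¹ ((hQ (evalE α A) (evalE α g)).inv_inv)
    rwa [inv_inv] at h'
  have c3 : s * p⁻¹ * s⁻¹ = p⁻¹ := commConj s p⁻¹ ((hQ (evalE α D) (evalE α g)).inv_right)
  have c4 : p * q * p⁻¹ = q := commConj p q (hQ _ _)
  have hmkx : PhiC ψ (evalE α (g * B * h * B⁻¹)) = p * q := by
    simp only [phiC_eval_mul ψ hψ, phiC_eval_inv ψ hψ, ← hp, ← hq, ← hr]
    calc p * r * q * r⁻¹ = p * (r * q * r⁻¹) := by group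
      _ = p * q := by rw [c1]
  have hmkw : PhiC ψ (evalE α (g * B * h * B⁻¹ * D * (A⁻¹ * g⁻¹ * A) * D⁻¹)) = q := by
    simp only [phiC_eval_mul ψ hψ, phiC_eval_inv ψ hψ, ← hp, ← hq, ← hr, ← hs, ← ht]
    calc p * r * q * r⁻¹ * s * (t⁻¹ * p⁻¹ * t) * s⁻¹
        = p * r * q * r⁻¹ * s * p⁻¹ * s⁻¹ := by rw [c2]
      _ = (p * (r * q * r⁻¹)) * (s * p⁻¹ * s⁻¹) := by group
      _ = p * q * p⁻¹ := by rw [c1, c3]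
      _ = q := c4
  have hz1mem : D * (A * C)⁻¹ ∈ Subgroup.center G := by
    rw [← QuotientGroup.eq_one_iff (D * (A * C)⁻¹)]
    have e : ((D * (A * C)⁻¹ : G) : G ⧸ Subgroup.center G) =
        PhiC ψ (evalE α (g * B * h * B⁻¹)) * (PhiC ψ (evalE α g) * PhiC ψ (evalE α h))⁻¹ := by
      rw [hDdef, hA, hC]
      simp [PhiC]
      rfl
    rw [e, hmkx, ← hp, ← hq]
    group
  have hz2mem : E * C⁻¹ ∈ Subgroup.center G := by
    rw [← QuotientGroup.eq_one_iff (E * C⁻¹)]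
    have e : ((E * C⁻¹ : G) : G ⧸ Subgroup.center G) =
        PhiC ψ (evalE α (g * B * h * B⁻¹ * D * (A⁻¹ * g⁻¹ * A) * D⁻¹)) *
          (PhiC ψ (evalE α h))⁻¹ := by
      rw [hEdef, hC]
      simp [PhiC]
      rfl
    rw [e, hmkw, ← hq]
    group
  have hz3mem : A * C * A⁻¹ * C⁻¹ ∈ Subgroup.center G := by
    rw [← QuotientGroup.eq_one_iff (A * C * A⁻¹ * C⁻¹)]
    have e : ((A * C * A⁻¹ * C⁻¹ : G) : G ⧸ Subgroup.center G) = p * q * p⁻¹ * q⁻¹ := by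
      rw [hA, hC]
      simp [PhiC, hp, hq]
      rfl
    rw [e, (hQ (evalE α g) (evalE α h)).eq, ← hp, ← hq]
    group
  have hz4mem : B * C * B⁻¹ * C⁻¹ ∈ Subgroup.center G := by
    rw [← QuotientGroup.eq_one_iff (B * C * B⁻¹ * C⁻¹)]
    have e : ((B * C * B⁻¹ * C⁻¹ : G) : G ⧸ Subgroup.center G) = u * q * u⁻¹ * q⁻¹ := by
      rw [hB, hC]
      simp [PhiC, hu, hq]
      rfl
    rw [e, (hQ (evalE β g) (evalE α h)).eq, ← hu, ← hq]
    group
  have hz1 : ∀ w : G, (D * (A * C)⁻¹) * w = w * (D * (A * C)⁻¹) :=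
    fun w => ((Subgroup.mem_center_iff.1 hz1mem) w).symm
  have hz2 : ∀ w : G, (E * C⁻¹) * w = w * (E * C⁻¹) :=
    fun w => ((Subgroup.mem_center_iff.1 hz2mem) w).symm
  have hz3 : ∀ w : G, (A * C * A⁻¹ * C⁻¹) * w = w * (A * C * A⁻¹ * C⁻¹) :=
    fun w => ((Subgroup.mem_center_iff.1 hz3mem) w).symm
  have hz4 : ∀ w : G, (B * C * B⁻¹ * C⁻¹) * w = w * (B * C * B⁻¹ * C⁻¹) :=
    fun w => ((Subgroup.mem_center_iff.1 hz4mem) w).symm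
  exact main_core g h k A B C D E _ _ _ _ hz1 hz2 hz3 hz4
    (by group) (by group) (by group) (by group)
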